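/- For every ε ∈ (0,1), the sets G_ε and B_ε are Lebesgue measurable, with Lebesgue measures λ(G_ε) = 1 − ε and λ(B_ε) = ε (i.e., the set of good channels has measure equal to the capacity 1 − ε of the binary erasure channel, and the set of bad channels has the complementary measure). -/

import Mathlib

open Filter Set MeasureTheory

noncomputable section

/-- `g_0(z) = 2z - z²` (bit `false`), `g_1(z) = z²` (bit `true`). -/
def gBit (c : Bool) (z : ℝ) : ℝ := if c then z ^ 2 else 2 * z - z ^ 2

/-- `pPre b n z = g_{b_n}(g_{b_{n-1}}(⋯ g_{b_1}(z) ⋯))`, where `b_i` is `b (i-1)`. -/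
def pPre (b : ℕ → Bool) : ℕ → ℝ → ℝ
  | 0, z => z
  | n + 1, z => gBit (b n) (pPre b n z)

/-- `f(b) = Σ_{n ≥ 1} b_n 2^{-n}`. -/
def fBin (b : ℕ → Bool) : ℝ := ∑' n : ℕ, (if b n then (1 : ℝ) else 0) / 2 ^ (n + 1)

/-- The dyadic rationals in `[0,1]`. -/
def dyadics : Set ℝ := Set.Icc 0 1 ∩ {x : ℝ | ∃ (p : ℤ) (n : ℕ), x = (p : ℝ) / 2 ^ n}

/-- The good channels of a BEC with erasure probability `ε`: `x ∈ [0,1]` such that some binary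
expansion `b` of `x` satisfies `p_{b^n}(ε) → 0`. -/
def Gset (ε : ℝ) : Set ℝ :=
  {x : ℝ | ∃ b : ℕ → Bool, fBin b = x ∧ Tendsto (fun n => pPre b n ε) atTop (nhds 0)}

/-- The bad channels of a BEC with erasure probability `ε`: `x ∈ [0,1]` such that some binary
expansion `b` of `x` satisfies `p_{b^n}(ε) → 1`. -/
def Bset (ε : ℝ) : Set ℝ :=
  {x : ℝ | ∃ b : ℕ → Bool, fBin b = x ∧ Tendsto (fun n => pPre b n ε) atTop (nhds 1)}

/-- Hamming weight `w(b^n)` of the length-`n` prefix of `b`. -/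
def wPre (b : ℕ → Bool) (n : ℕ) : ℕ := ∑ i ∈ Finset.range n, (if b i then 1 else 0)

/-- `b` is `ρ`-heavy: `liminf_{n→∞} (w(b^n) - nρ) ≥ 0` (the liminf computed in `EReal`),
equivalently `liminf 2^{w(b^n)} / 2^{nρ} ≥ 1`. -/
def Heavy (ρ : ℝ) (b : ℕ → Bool) : Prop :=
  0 ≤ atTop.liminf (fun n : ℕ => (((wPre b n : ℝ) - n * ρ : ℝ) : EReal))

/-- The set of `ρ`-heavy channels. -/
def Hset (ρ : ℝ) : Set ℝ := {x : ℝ | ∃ b : ℕ → Bool, fBin b = x ∧ Heavy ρ b}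


/-! ### basic gBit/pPre lemmas -/

lemma gBit_mem {c : Bool} {z : ℝ} (hz : z ∈ Icc (0:ℝ) 1) : gBit c z ∈ Icc (0:ℝ) 1 := by
  obtain ⟨h0, h1⟩ := hz
  cases c
  · simp only [gBit, Bool.false_eq_true, if_false]
    constructor <;> nlinarith
  · simp only [gBit, if_true]
    constructor <;> nlinarith

lemma pPre_mem {b : ℕ → Bool} {ε : ℝ} (hε : ε ∈ Icc (0:ℝ) 1) (n : ℕ) :
    pPre b n ε ∈ Icc (0:ℝ) 1 := by
  induction n with
  | zero => exact hε
  | succ n ih => exact gBit_mem ih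

lemma pPre_congr {b b' : ℕ → Bool} {n : ℕ} (h : ∀ i < n, b i = b' i) (z : ℝ) :
    pPre b n z = pPre b' n z := by
  induction n with
  | zero => rfl
  | succ n ih =>
      show gBit (b n) (pPre b n z) = gBit (b' n) (pPre b' n z)
      rw [ih (fun i hi => h i (Nat.lt_succ_of_lt hi)), h n (Nat.lt_succ_self n)]

lemma abs_pPre_step {b : ℕ → Bool} {ε : ℝ} (hε : ε ∈ Icc (0:ℝ) 1) (n : ℕ) :
    |pPre b (n+1) ε - pPre b n ε| = pPre b n ε * (1 - pPre b n ε) := by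
  obtain ⟨h0, h1⟩ := pPre_mem (b := b) hε n
  rw [show pPre b (n+1) ε = gBit (b n) (pPre b n ε) from rfl]
  cases b n
  · simp only [gBit, Bool.false_eq_true, if_false]
    rw [abs_of_nonneg (by nlinarith)]; ring
  · simp only [gBit, if_true]
    rw [abs_of_nonpos (by nlinarith)]; ring

lemma limit_dichotomy {b : ℕ → Bool} {ε L : ℝ} (hε : ε ∈ Icc (0:ℝ) 1)
    (h : Tendsto (fun n => pPre b n ε) atTop (nhds L)) : L = 0 ∨ L = 1 := by
  have h1 : Tendsto (fun n => pPre b (n+1) ε - pPre b n ε) atTop (nhds (L - L)) :=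
    ((h.comp (tendsto_add_atTop_nat 1)).sub h)
  have h2 : Tendsto (fun n => |pPre b (n+1) ε - pPre b n ε|) atTop (nhds 0) := by
    simpa using h1.abs
  have h3 : Tendsto (fun n => pPre b n ε * (1 - pPre b n ε)) atTop (nhds (L * (1 - L))) :=
    h.mul ((tendsto_const_nhds (x := (1:ℝ))).sub h)
  have h4 : Tendsto (fun n => pPre b n ε * (1 - pPre b n ε)) atTop (nhds 0) := by
    refine h2.congr (fun n => abs_pPre_step hε n)
  have := tendsto_nhds_unique h3 h4
  rcases mul_eq_zero.1 this with h | h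
  · left; exact h
  · right; linarith [sub_eq_zero.1 (by linarith : (1:ℝ) - L = 0)]

/-! ### integer division helper -/

lemma my_ediv_ediv (a b c : ℤ) (hb : 0 < b) (hc : 0 < c) : a / b / c = a / (b * c) := by
  have hbc : 0 < b * c := mul_pos hb hc
  have h1 : a = b * c * (a / b / c) + (b * ((a / b) % c) + a % b) := by
    have e1 : b * (a / b) + a % b = a := Int.mul_ediv_add_emod a b
    have e2 : c * (a / b / c) + (a / b) % c = a / b := Int.mul_ediv_add_emod (a / b) c
    nlinarith [e1, e2]
  have hr0 : 0 ≤ b * ((a / b) % c) + a % b := by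
    have := Int.emod_nonneg a (ne_of_gt hb)
    have := Int.emod_nonneg (a / b) (ne_of_gt hc)
    positivity
  have hrlt : b * ((a / b) % c) + a % b < b * c := by
    have h5 := Int.emod_lt_of_pos a hb
    have h6 := Int.emod_lt_of_pos (a / b) hc
    nlinarith
  conv_rhs => rw [h1]
  rw [add_comm, Int.add_mul_ediv_left _ _ (ne_of_gt hbc),
    Int.ediv_eq_zero_of_lt hr0 hrlt, zero_add]

/-! ### digits -/

def dig (x : ℝ) (n : ℕ) : Bool := decide (⌊x * 2 ^ (n+1)⌋ % 2 = 1)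

lemma floor_mul_two_div_two (a : ℝ) : ⌊a * 2⌋ / 2 = ⌊a⌋ := by
  have h1 : (⌊a⌋ : ℝ) ≤ a := Int.floor_le a
  have h2 : a < ⌊a⌋ + 1 := Int.lt_floor_add_one a
  have h3 : 2 * ⌊a⌋ ≤ ⌊a * 2⌋ := by
    rw [Int.le_floor]; push_cast; linarith
  have h4 : ⌊a * 2⌋ < 2 * ⌊a⌋ + 2 := by
    rw [Int.floor_lt]; push_cast; linarith
  omega

lemma floor_pow_div (x : ℝ) (m k : ℕ) : ⌊x * 2 ^ (m + k)⌋ / 2 ^ k = ⌊x * 2 ^ m⌋ := by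
  induction k with
  | zero => simp
  | succ k ih =>
      have : x * 2 ^ (m + (k+1)) = (x * 2 ^ (m+k)) * 2 := by ring
      rw [this, pow_succ, mul_comm (2^k : ℤ) 2, ← my_ediv_ediv _ 2 (2^k) (by norm_num)
        (by positivity), floor_mul_two_div_two, ih]

def digInt (n : ℕ) (m : ℤ) (i : ℕ) : Bool := decide (m / 2 ^ (n - 1 - i) % 2 = 1)

lemma dig_eq_digInt {x : ℝ} {n i : ℕ} (h : i < n) : dig x i = digInt n ⌊x * 2 ^ n⌋ i := by
  have e : (i + 1) + (n - 1 - i) = n := by omega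
  have h2 := floor_pow_div x (i+1) (n - 1 - i)
  rw [e] at h2
  unfold dig digInt
  rw [h2]

def Hfun (ε : ℝ) (n : ℕ) (m : ℤ) : ℝ := pPre (digInt n m) n ε

lemma pPre_dig_eq (ε x : ℝ) (n : ℕ) : pPre (dig x) n ε = Hfun ε n ⌊x * 2 ^ n⌋ :=
  pPre_congr (fun i hi => dig_eq_digInt hi) ε

lemma Hfun_succ (ε : ℝ) (n : ℕ) (m : ℤ) (c : Bool) :
    Hfun ε (n+1) (2 * m + (if c then 1 else 0)) = gBit c (Hfun ε n m) := by
  have hlast : digInt (n+1) (2 * m + (if c then 1 else 0)) n = c := by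
    unfold digInt
    have : n + 1 - 1 - n = 0 := by omega
    rw [this]
    cases c <;> simp <;> omega
  have hpre : ∀ i < n, digInt (n+1) (2 * m + (if c then 1 else 0)) i = digInt n m i := by
    intro i hi
    unfold digInt
    have e1 : (n + 1 - 1 - i) = (n - 1 - i) + 1 := by omega
    rw [e1, pow_succ, mul_comm ((2:ℤ) ^ (n-1-i)) 2, ← my_ediv_ediv _ 2 _ (by norm_num)
      (by positivity)]
    have : (2 * m + (if c then 1 else 0)) / 2 = m := by cases c <;> simp <;> omega
    rw [this]
  show gBit (digInt (n+1) _ n) (pPre _ n ε) = _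
  rw [hlast, pPre_congr hpre]
  rfl

/-! ### the measure and the process -/

def Zf (ε : ℝ) (n : ℕ) (x : ℝ) : ℝ := pPre (dig x) n ε

def cellI (n : ℕ) (m : ℤ) : Set ℝ := {x | ⌊x * 2 ^ n⌋ = m}

def Pm : Measure ℝ := volume.restrict (Ico 0 1)

lemma measurable_floorMul (n : ℕ) : Measurable fun x : ℝ => ⌊x * 2 ^ n⌋ :=
  (measurable_id.mul_const _).floor

lemma cellI_eq (n : ℕ) (m : ℤ) :
    cellI n m = Ico ((m : ℝ) / 2 ^ n) (((m : ℝ) + 1) / 2 ^ n) := by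
  have h2 : (0:ℝ) < 2 ^ n := by positivity
  ext x
  rw [cellI, mem_setOf_eq, Int.floor_eq_iff, mem_Ico, div_le_iff₀ h2, lt_div_iff₀ h2]

lemma measurableSet_cellI (n : ℕ) (m : ℤ) : MeasurableSet (cellI n m) := by
  rw [cellI_eq]; exact measurableSet_Ico

instance : IsProbabilityMeasure Pm := by
  constructor
  rw [Pm, Measure.restrict_apply_univ, Real.volume_Ico]
  norm_num

lemma Zf_eq (ε : ℝ) (n : ℕ) : Zf ε n = fun x => Hfun ε n ⌊x * 2 ^ n⌋ :=
  funext fun x => pPre_dig_eq ε x n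

lemma Zf_mem {ε : ℝ} (hε : ε ∈ Icc (0:ℝ) 1) (n : ℕ) (x : ℝ) : Zf ε n x ∈ Icc (0:ℝ) 1 :=
  pPre_mem hε n

/-! ### filtration -/

def Filt : Filtration ℕ (inferInstance : MeasurableSpace ℝ) where
  seq n := MeasurableSpace.comap (fun x : ℝ => ⌊x * 2 ^ n⌋) ⊤
  mono' := by
    intro n n' h
    show MeasurableSpace.comap (fun x : ℝ => ⌊x * 2 ^ n⌋) ⊤
        ≤ MeasurableSpace.comap (fun x : ℝ => ⌊x * 2 ^ n'⌋) ⊤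
    have hcomp : (fun x : ℝ => ⌊x * 2 ^ n⌋)
        = (fun m : ℤ => m / 2 ^ (n' - n)) ∘ (fun x : ℝ => ⌊x * 2 ^ n'⌋) := by
      funext x
      simp only [Function.comp_apply]
      rw [← floor_pow_div x n (n' - n), show n + (n' - n) = n' from by omega]
    rw [hcomp, ← MeasurableSpace.comap_comp]
    exact MeasurableSpace.comap_mono le_top
  le' n := (measurable_floorMul n).comap_le

lemma measurable_filt (n : ℕ) : Measurable[Filt n] (fun x : ℝ => ⌊x * 2 ^ n⌋) :=
  measurable_iff_comap_le.2 le_rfl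

lemma stronglyMeasurable_Zf (ε : ℝ) (n : ℕ) : StronglyMeasurable[Filt n] (Zf ε n) := by
  rw [Zf_eq]
  exact ((measurable_from_top (f := Hfun ε n)).comp (measurable_filt n)).stronglyMeasurable

lemma adapted_Zf (ε : ℝ) : StronglyAdapted Filt (Zf ε) := fun n => stronglyMeasurable_Zf ε n

lemma measurable_Zf (ε : ℝ) (n : ℕ) : Measurable (Zf ε n) :=
  ((stronglyMeasurable_Zf ε n).mono (Filt.le n)).measurable

lemma integrable_Zf {ε : ℝ} (hε : ε ∈ Icc (0:ℝ) 1) (n : ℕ) : Integrable (Zf ε n) Pm := by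
  refine ⟨(measurable_Zf ε n).aestronglyMeasurable, HasFiniteIntegral.of_bounded (C := 1) ?_⟩
  refine Eventually.of_forall fun x => ?_
  obtain ⟨h0, h1⟩ := Zf_mem hε n x
  rw [Real.norm_eq_abs, abs_of_nonneg h0]; exact h1

/-! ### cell measures and integrals -/

lemma Pm_cellI (n : ℕ) (m : ℤ) :
    Pm (cellI n m) = if 0 ≤ m ∧ m + 1 ≤ 2 ^ n then ENNReal.ofReal ((2 ^ n : ℝ)⁻¹) else 0 := by
  have h2 : (0:ℝ) < 2 ^ n := by positivity
  rw [Pm, Measure.restrict_apply (measurableSet_cellI n m), cellI_eq]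
  by_cases hm : 0 ≤ m ∧ m + 1 ≤ 2 ^ n
  · rw [if_pos hm]
    have hsub : Ico ((m : ℝ) / 2 ^ n) (((m : ℝ) + 1) / 2 ^ n) ⊆ Ico (0:ℝ) 1 := by
      apply Ico_subset_Ico
      · exact div_nonneg (by exact_mod_cast hm.1) (le_of_lt h2)
      · rw [div_le_one h2]
        have : ((m : ℝ) + 1) ≤ ((2 ^ n : ℤ) : ℝ) := by exact_mod_cast hm.2
        simpa using this
    rw [inter_eq_left.2 hsub, Real.volume_Ico]
    congr 1
    field_simp
    ring
  · rw [if_neg hm]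
    have : Ico ((m : ℝ) / 2 ^ n) (((m : ℝ) + 1) / 2 ^ n) ∩ Ico (0:ℝ) 1 = ∅ := by
      rcases not_and_or.1 hm with hm' | hm'
      · push_neg at hm'
        apply eq_empty_of_forall_notMem
        rintro x ⟨⟨_, hx2⟩, hx3, _⟩
        have : ((m : ℝ) + 1) ≤ 0 := by
          have : ((m : ℝ) + 1) ≤ ((0:ℤ) : ℝ) := by exact_mod_cast hm'
          simpa using this
        have : x < 0 := lt_of_lt_of_le hx2 (by apply div_nonpos_of_nonpos_of_nonneg <;> [linarith; positivity])
        linarith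
      · push_neg at hm'
        apply eq_empty_of_forall_notMem
        rintro x ⟨⟨hx1, _⟩, _, hx4⟩
        have hge : ((2 ^ n : ℤ) : ℝ) ≤ (m : ℝ) := by exact_mod_cast (by omega : (2^n : ℤ) ≤ m)
        have : (1:ℝ) ≤ (m : ℝ) / 2 ^ n := by
          rw [le_div_iff₀ h2]; push_cast at hge ⊢; linarith
        linarith
    rw [this, measure_empty]

lemma setIntegral_cellI (ε : ℝ) (n : ℕ) (m : ℤ) :
    ∫ x in cellI n m, Zf ε n x ∂Pm = (Pm (cellI n m)).toReal * Hfun ε n m := by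
  rw [setIntegral_congr_fun (measurableSet_cellI n m)
    (fun x hx => by rw [show Zf ε n x = Hfun ε n ⌊x * 2 ^ n⌋ from pPre_dig_eq ε x n, hx]),
    setIntegral_const, smul_eq_mul]
  rfl

lemma cellI_split (n : ℕ) (m : ℤ) :
    cellI n m = cellI (n+1) (2*m) ∪ cellI (n+1) (2*m+1) := by
  ext x
  have h := floor_pow_div x n 1
  rw [pow_one] at h
  simp only [cellI, mem_setOf_eq, mem_union]
  omega

lemma cellI_disj (n : ℕ) {m m' : ℤ} (h : m ≠ m') : Disjoint (cellI n m) (cellI n m') := by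
  rw [disjoint_left]
  intro x hx hx'
  exact h (hx.symm.trans hx')

lemma key_step {ε : ℝ} (hε : ε ∈ Icc (0:ℝ) 1) (n : ℕ) (m : ℤ) :
    ∫ x in cellI n m, Zf ε (n+1) x ∂Pm = ∫ x in cellI n m, Zf ε n x ∂Pm := by
  have hint := integrable_Zf hε (n+1)
  have hR := setIntegral_cellI ε n m
  have hL : ∫ x in cellI n m, Zf ε (n+1) x ∂Pm
      = (Pm (cellI (n+1) (2*m))).toReal * Hfun ε (n+1) (2*m)
        + (Pm (cellI (n+1) (2*m+1))).toReal * Hfun ε (n+1) (2*m+1) := by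
    rw [cellI_split n m,
      setIntegral_union (cellI_disj (n+1) (by omega)) (measurableSet_cellI _ _)
        hint.integrableOn hint.integrableOn,
      setIntegral_cellI, setIntegral_cellI]
  rw [hL, hR]
  have e0 : Hfun ε (n+1) (2*m) = gBit false (Hfun ε n m) := by
    have := Hfun_succ ε n m false
    simpa using this
  have e1 : Hfun ε (n+1) (2*m+1) = gBit true (Hfun ε n m)  := by
    have := Hfun_succ ε n m true
    simpa using this
  rw [e0, e1, Pm_cellI, Pm_cellI, Pm_cellI]
  clear hL hR
  by_cases hm : 0 ≤ m ∧ m + 1 ≤ 2 ^ n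
  · have h1 : (0 ≤ 2*m ∧ 2*m + 1 ≤ 2 ^ (n+1)) := by
      constructor <;> [omega; skip]
      have : (2:ℤ) ^ (n+1) = 2 * 2 ^ n := by ring
      omega
    have h2 : (0 ≤ 2*m+1 ∧ (2*m+1) + 1 ≤ 2 ^ (n+1)) := by
      constructor <;> [omega; skip]
      have : (2:ℤ) ^ (n+1) = 2 * 2 ^ n := by ring
      omega
    rw [if_pos hm, if_pos h1, if_pos h2]
    rw [ENNReal.toReal_ofReal (by positivity), ENNReal.toReal_ofReal (by positivity)]
    set h := Hfun ε n m
    simp only [gBit, Bool.false_eq_true, if_false, if_true]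
    have : (2:ℝ) ^ (n+1) = 2 * 2 ^ n := by ring
    rw [this]
    have h2n : (2:ℝ) ^ n ≠ 0 := by positivity
    field_simp
    ring
  · have h1 : ¬(0 ≤ 2*m ∧ 2*m + 1 ≤ 2 ^ (n+1)) := by
      intro hc
      apply hm
      have : (2:ℤ) ^ (n+1) = 2 * 2 ^ n := by ring
      omega
    have h2 : ¬(0 ≤ 2*m+1 ∧ (2*m+1) + 1 ≤ 2 ^ (n+1)) := by
      intro hc
      apply hm
      have : (2:ℤ) ^ (n+1) = 2 * 2 ^ n := by ring
      omega
    rw [if_neg hm, if_neg h1, if_neg h2]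
    simp

/-! ### martingale property -/

lemma setIntegral_eq_filt {ε : ℝ} (hε : ε ∈ Icc (0:ℝ) 1) (n : ℕ) {s : Set ℝ}
    (hs : MeasurableSet[Filt n] s) :
    ∫ x in s, Zf ε n x ∂Pm = ∫ x in s, Zf ε (n+1) x ∂Pm := by
  obtain ⟨t, -, rfl⟩ := hs
  have hsu : (fun x : ℝ => ⌊x * 2 ^ n⌋) ⁻¹' t = ⋃ j : t, cellI n (j : ℤ) := by
    ext x
    simp only [mem_preimage, mem_iUnion, cellI, mem_setOf_eq]
    constructor
    · intro h; exact ⟨⟨_, h⟩, rfl⟩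
    · rintro ⟨⟨j, hj⟩, h⟩; rw [h]; exact hj
  have hdisj : Pairwise (Function.onFun Disjoint fun j : t => cellI n (j : ℤ)) :=
    fun j j' hjj => cellI_disj n (fun hc => hjj (Subtype.ext hc))
  rw [hsu,
    integral_iUnion (fun j => measurableSet_cellI n _) hdisj (integrable_Zf hε n).integrableOn,
    integral_iUnion (fun j => measurableSet_cellI n _) hdisj (integrable_Zf hε (n+1)).integrableOn]
  exact tsum_congr fun j => (key_step hε n j).symm

lemma condexp_step {ε : ℝ} (hε : ε ∈ Icc (0:ℝ) 1) (n : ℕ) :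
    Zf ε n =ᵐ[Pm] Pm[Zf ε (n+1) | Filt n] := by
  haveI := isFiniteMeasure_trim (Filt.le n) (μ := Pm)
  exact ae_eq_condExp_of_forall_setIntegral_eq (Filt.le n) (integrable_Zf hε (n+1))
    (fun s _ _ => (integrable_Zf hε n).integrableOn)
    (fun s hs _ => setIntegral_eq_filt hε n hs)
    (StronglyMeasurable.aestronglyMeasurable (stronglyMeasurable_Zf ε n))

lemma martingale_Zf {ε : ℝ} (hε : ε ∈ Icc (0:ℝ) 1) : Martingale (Zf ε) Filt Pm :=
  martingale_nat (adapted_Zf ε) (integrable_Zf hε) (fun n => condexp_step hε n)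

lemma eLpNorm_Zf_le {ε : ℝ} (hε : ε ∈ Icc (0:ℝ) 1) (n : ℕ) :
    eLpNorm (Zf ε n) 1 Pm ≤ ((1 : NNReal) : ENNReal) := by
  refine le_trans (eLpNorm_le_of_ae_bound (C := 1) (Eventually.of_forall fun x => ?_)) ?_
  · obtain ⟨h0, h1⟩ := Zf_mem hε n x
    rw [Real.norm_eq_abs, abs_of_nonneg h0]; exact h1
  · simp [measure_univ]

lemma ae_exists_lim {ε : ℝ} (hε : ε ∈ Icc (0:ℝ) 1) :
    ∀ᵐ x ∂Pm, ∃ c, Tendsto (fun n => Zf ε n x) atTop (nhds c) :=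
  (martingale_Zf hε).submartingale.exists_ae_tendsto_of_bdd (R := 1) (eLpNorm_Zf_le hε)

/-! ### the limit sets -/

def Aset (ε L : ℝ) : Set ℝ := {x | Tendsto (fun n => Zf ε n x) atTop (nhds L)}

lemma measurableSet_Aset (ε L : ℝ) : MeasurableSet (Aset ε L) :=
  measurableSet_tendsto (nhds L) (fun n => measurable_Zf ε n)

lemma Aset_disjoint (ε : ℝ) : Aset ε 0 ∩ Aset ε 1 = ∅ := by
  apply eq_empty_of_forall_notMem
  rintro x ⟨h0, h1⟩
  exact zero_ne_one (tendsto_nhds_unique h0 h1)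

lemma ae_mem_union {ε : ℝ} (hε : ε ∈ Icc (0:ℝ) 1) :
    ∀ᵐ x ∂Pm, x ∈ Aset ε 0 ∪ Aset ε 1 := by
  filter_upwards [ae_exists_lim hε] with x hx
  obtain ⟨c, hc⟩ := hx
  rcases limit_dichotomy (b := dig x) hε hc with rfl | rfl
  · exact Or.inl hc
  · exact Or.inr hc

lemma integral_Zf {ε : ℝ} (hε : ε ∈ Icc (0:ℝ) 1) (n : ℕ) : ∫ x, Zf ε n x ∂Pm = ε := by
  induction n with
  | zero =>
      have : (Zf ε 0) = fun _ => ε := rfl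
      rw [this, integral_const]
      simp
  | succ n ih =>
      have h := setIntegral_eq_filt hε n (MeasurableSet.univ (α := ℝ))
      rw [setIntegral_univ, setIntegral_univ] at h
      rw [← h]; exact ih

lemma Pm_Aset_one {ε : ℝ} (hε : ε ∈ Icc (0:ℝ) 1) : Pm (Aset ε 1) = ENNReal.ofReal ε := by
  have hA := measurableSet_Aset ε 1
  have hlim : Tendsto (fun n => ∫ x, Zf ε n x ∂Pm) atTop
      (nhds (∫ x, (Aset ε 1).indicator (fun _ => (1:ℝ)) x ∂Pm)) := by
    refine tendsto_integral_of_dominated_convergence (fun _ => (1:ℝ))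
      (fun n => (measurable_Zf ε n).aestronglyMeasurable) (integrable_const 1)
      (fun n => Eventually.of_forall fun x => ?_) ?_
    · obtain ⟨h0, h1⟩ := Zf_mem hε n x
      rw [Real.norm_eq_abs, abs_of_nonneg h0]; exact h1
    · filter_upwards [ae_exists_lim hε] with x hx
      obtain ⟨c, hc⟩ := hx
      rcases limit_dichotomy (b := dig x) hε hc with rfl | rfl
      · have hnm : x ∉ Aset ε 1 := fun hmem =>
          zero_ne_one (tendsto_nhds_unique hc hmem)
        have he : (Aset ε 1).indicator (fun _ => (1:ℝ)) x = 0 :=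
          Set.indicator_of_notMem hnm _
        rw [he]; exact hc
      · have hm : x ∈ Aset ε 1 := hc
        have he : (Aset ε 1).indicator (fun _ => (1:ℝ)) x = 1 :=
          Set.indicator_of_mem hm _
        rw [he]; exact hc
  rw [integral_indicator_const _ hA, smul_eq_mul, mul_one] at hlim
  have hconst : Tendsto (fun n : ℕ => ∫ x, Zf ε n x ∂Pm) atTop (nhds ε) := by
    have he : (fun n : ℕ => ∫ x, Zf ε n x ∂Pm) = fun _ => ε := funext (integral_Zf hε)
    rw [he]; exact tendsto_const_nhds
  have heq : (Pm (Aset ε 1)).toReal = ε := tendsto_nhds_unique hlim hconst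
  calc Pm (Aset ε 1) = ENNReal.ofReal ((Pm (Aset ε 1)).toReal) :=
        (ENNReal.ofReal_toReal (measure_ne_top Pm _)).symm
    _ = ENNReal.ofReal ε := by rw [heq]

lemma Pm_Aset_zero {ε : ℝ} (hε : ε ∈ Icc (0:ℝ) 1) :
    Pm (Aset ε 0) = ENNReal.ofReal (1 - ε) := by
  have hcongr : Aset ε 0 =ᵐ[Pm] ((Aset ε 1)ᶜ : Set ℝ) := by
    rw [ae_eq_set]
    constructor
    · have he : Aset ε 0 \ (Aset ε 1)ᶜ = ∅ := by
        rw [diff_compl, Aset_disjoint ε]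
      rw [he, measure_empty]
    · have h := ae_mem_union hε
      rw [ae_iff] at h
      refine measure_mono_null (fun x hx => ?_) h
      obtain ⟨hx1, hx0⟩ := hx
      simp only [mem_setOf_eq, mem_union]
      push_neg
      exact ⟨hx0, hx1⟩
  rw [measure_congr hcongr, prob_compl_eq_one_sub (measurableSet_Aset ε 1), Pm_Aset_one hε,
    ← ENNReal.ofReal_one, ← ENNReal.ofReal_sub _ hε.1]


/-! ### binary expansions -/

def term (b : ℕ → Bool) (n : ℕ) : ℝ := (if b n then (1 : ℝ) else 0) / 2 ^ (n + 1)

lemma term_nonneg (b : ℕ → Bool) (n : ℕ) : 0 ≤ term b n := by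
  unfold term; positivity

lemma term_le (b : ℕ → Bool) (n : ℕ) : term b n ≤ 1 / 2 / 2 ^ n := by
  unfold term
  rw [div_div, ← pow_succ']
  apply div_le_div_of_nonneg_right ?_ (by positivity)
  · split <;> norm_num
  
lemma summable_half : Summable (fun i : ℕ => (1:ℝ)/2/2^i) := by
  refine ((summable_geometric_two).mul_left (1/2 : ℝ)).congr fun i => ?_
  rw [div_pow, one_pow, div_mul_div_comm, one_mul, div_div]

lemma summable_term (b : ℕ → Bool) : Summable (term b) :=
  Summable.of_nonneg_of_le (term_nonneg b) (term_le b) summable_half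

lemma fBin_eq_tsum (b : ℕ → Bool) : fBin b = ∑' n, term b n := rfl

lemma fBin_mem (b : ℕ → Bool) : fBin b ∈ Icc (0:ℝ) 1 := by
  constructor
  · exact tsum_nonneg (term_nonneg b)
  · calc fBin b ≤ ∑' n, 1 / 2 / 2 ^ n :=
        Summable.tsum_le_tsum (term_le b) (summable_term b) summable_half
      _ = 1 := tsum_geometric_two' 1

def kIntB (b : ℕ → Bool) : ℕ → ℤ
  | 0 => 0
  | n+1 => 2 * kIntB b n + (if b n then 1 else 0)

lemma partial_eq (b : ℕ → Bool) (n : ℕ) :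
    ∑ i ∈ Finset.range n, term b i = (kIntB b n : ℝ) / 2 ^ n := by
  induction n with
  | zero => simp [kIntB]
  | succ n ih =>
      rw [Finset.sum_range_succ, ih]
      show _ + term b n = ((2 * kIntB b n + (if b n then 1 else 0) : ℤ) : ℝ) / 2 ^ (n+1)
      unfold term
      rcases b n <;> push_cast <;> field_simp <;> ring

lemma tail_bounds (b : ℕ → Bool) (n : ℕ) :
    ∑ i ∈ Finset.range n, term b i ≤ fBin b ∧
      fBin b ≤ ∑ i ∈ Finset.range n, term b i + 1 / 2 ^ n := by
  have hsum := Summable.sum_add_tsum_nat_add n (summable_term b)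
  have htail0 : 0 ≤ ∑' i, term b (i + n) := tsum_nonneg fun i => term_nonneg b _
  have hg : Summable (fun i : ℕ => (1 : ℝ) / 2 ^ n * (1 / 2 / 2 ^ i)) :=
    summable_half.mul_left _
  have htail1 : ∑' i, term b (i + n) ≤ 1 / 2 ^ n := by
    calc ∑' i, term b (i + n) ≤ ∑' i : ℕ, 1 / 2 ^ n * (1 / 2 / 2 ^ i) := by
          refine Summable.tsum_le_tsum (fun i => ?_) ((summable_term b).comp_injective
            (add_left_injective n)) hg
          calc term b (i + n) ≤ 1 / 2 / 2 ^ (i + n) := term_le b _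
            _ = 1 / 2 ^ n * (1 / 2 / 2 ^ i) := by rw [pow_add]; ring
      _ = 1 / 2 ^ n * ∑' i : ℕ, (1 / 2 / 2 ^ i) := by rw [tsum_mul_left]
      _ = 1 / 2 ^ n := by rw [tsum_geometric_two' 1, mul_one]
  rw [fBin_eq_tsum, ← hsum]
  constructor
  · linarith
  · linarith

/-! ### digits of a real number recover it -/

lemma floor_digits {x : ℝ} (hx : x ∈ Ico (0:ℝ) 1) (n : ℕ) :
    ⌊x * 2 ^ n⌋ = kIntB (dig x) n := by
  induction n with
  | zero =>
      show ⌊x * 1⌋ = 0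
      rw [mul_one, Int.floor_eq_zero_iff]
      exact hx
  | succ n ih =>
      have hdiv := floor_pow_div x n 1
      rw [pow_one] at hdiv
      have hd : (if dig x n then (1:ℤ) else 0) = ⌊x * 2 ^ (n+1)⌋ % 2 := by
        by_cases hb : ⌊x * 2 ^ (n+1)⌋ % 2 = 1
        · simp [dig, hb]
        · have h2 : ⌊x * 2 ^ (n+1)⌋ % 2 = 0 := by omega
          simp [dig, hb, h2]
      show ⌊x * 2 ^ (n+1)⌋ = 2 * kIntB (dig x) n + (if dig x n then 1 else 0)
      rw [← ih, hd]
      omega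

lemma partial_dig {x : ℝ} (hx : x ∈ Ico (0:ℝ) 1) (n : ℕ) :
    ∑ i ∈ Finset.range n, term (dig x) i = (⌊x * 2 ^ n⌋ : ℝ) / 2 ^ n := by
  rw [partial_eq, floor_digits hx]

lemma fBin_dig {x : ℝ} (hx : x ∈ Ico (0:ℝ) 1) : fBin (dig x) = x := by
  have hten : Tendsto (fun n => ∑ i ∈ Finset.range n, term (dig x) i) atTop (nhds x) := by
    have hb : ∀ n : ℕ, ‖∑ i ∈ Finset.range n, term (dig x) i - x‖ ≤ (1/2 : ℝ) ^ n := by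
      intro n
      have h2 : (0:ℝ) < 2 ^ n := by positivity
      rw [partial_dig hx n, Real.norm_eq_abs, abs_le]
      have hfl : (⌊x * 2 ^ n⌋ : ℝ) ≤ x * 2 ^ n := Int.floor_le _
      have hfl2 : x * 2 ^ n < ⌊x * 2 ^ n⌋ + 1 := Int.lt_floor_add_one _
      rw [div_pow, one_pow]
      have e1 : (⌊x * 2 ^ n⌋ : ℝ) / 2 ^ n ≤ x := by
        rw [div_le_iff₀ h2]; exact hfl
      have e2 : x < (⌊x * 2 ^ n⌋ : ℝ) / 2 ^ n + 1 / 2 ^ n := by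
        rw [← add_div, lt_div_iff₀ h2]; exact hfl2
      constructor <;> linarith
    have h0 : Tendsto (fun n => ∑ i ∈ Finset.range n, term (dig x) i - x) atTop (nhds 0) :=
      squeeze_zero_norm hb (tendsto_pow_atTop_nhds_zero_of_lt_one (by norm_num) (by norm_num))
    have := h0.add (tendsto_const_nhds (x := x))
    simpa using this
  have hhs : HasSum (term (dig x)) x :=
    (hasSum_iff_tendsto_nat_of_nonneg (term_nonneg (dig x)) x).2 hten
  rw [fBin_eq_tsum]
  exact hhs.tsum_eq

/-! ### uniqueness of non-dyadic expansions -/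

lemma one_mem_dyadics : (1:ℝ) ∈ dyadics :=
  ⟨⟨zero_le_one, le_refl 1⟩, 1, 0, by norm_num⟩

lemma unique_expansion {x : ℝ} {b : ℕ → Bool} (hb : fBin b = x) (hd : x ∉ dyadics) :
    b = dig x := by
  have hx1 : x ∈ Icc (0:ℝ) 1 := hb ▸ fBin_mem b
  have claim : ∀ n, ⌊x * 2 ^ n⌋ = kIntB b n := by
    intro n
    have h2 : (0:ℝ) < 2 ^ n := by positivity
    obtain ⟨hlo, hhi⟩ := tail_bounds b n
    rw [hb, partial_eq] at hlo hhi
    have hne1 : x ≠ (kIntB b n : ℝ) / 2 ^ n := by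
      intro he
      exact hd ⟨hx1, kIntB b n, n, he⟩
    have hne2 : x ≠ ((kIntB b n : ℝ) + 1) / 2 ^ n := by
      intro he
      refine hd ⟨hx1, kIntB b n + 1, n, ?_⟩
      push_cast
      exact he
    rw [Int.floor_eq_iff]
    constructor
    · rw [← div_le_iff₀ h2]
      exact hlo
    · rw [← lt_div_iff₀ h2]
      have : x ≤ ((kIntB b n : ℝ) + 1) / 2 ^ n := by
        rw [add_div]
        calc x ≤ (kIntB b n : ℝ) / 2 ^ n + 1 / 2 ^ n := hhi
          _ = _ := rfl
      exact lt_of_le_of_ne this hne2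
  funext i
  have h1 := claim (i + 1)
  have hrec : kIntB b (i+1) = 2 * kIntB b i + (if b i then 1 else 0) := rfl
  unfold dig
  rw [h1, hrec]
  cases hbi : b i
  · simp only [Bool.false_eq_true, if_false, add_zero]
    symm
    simp only [decide_eq_false_iff_not]
    omega
  · simp only [if_true]
    symm
    simp only [decide_eq_true_eq]
    omega


def Lset (ε L : ℝ) : Set ℝ :=
  {x : ℝ | ∃ b : ℕ → Bool, fBin b = x ∧ Tendsto (fun n => pPre b n ε) atTop (nhds L)}

lemma dyadics_countable : dyadics.Countable := by
  refine Set.Countable.mono (fun x hx => ?_)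
    (Set.countable_range (fun p : ℤ × ℕ => (p.1 : ℝ) / 2 ^ p.2))
  obtain ⟨-, p, n, hx⟩ := hx
  exact ⟨(p, n), hx.symm⟩

lemma dyadics_null : (volume : Measure ℝ) dyadics = 0 :=
  dyadics_countable.measure_zero _

lemma lset_decomp (ε L : ℝ) :
    Lset ε L = ((Aset ε L ∩ Ico 0 1) \ dyadics) ∪ (Lset ε L ∩ dyadics) := by
  ext x
  constructor
  · intro hx
    by_cases hd : x ∈ dyadics
    · exact Or.inr ⟨hx, hd⟩
    · obtain ⟨b, hb, htd⟩ := hx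
      have hx1 : x ∈ Icc (0:ℝ) 1 := hb ▸ fBin_mem b
      have hIco : x ∈ Ico (0:ℝ) 1 := by
        refine ⟨hx1.1, lt_of_le_of_ne hx1.2 (fun he => hd ?_)⟩
        rw [he]; exact one_mem_dyadics
      have hbd : b = dig x := unique_expansion hb hd
      refine Or.inl ⟨⟨?_, hIco⟩, hd⟩
      show Tendsto (fun n => Zf ε n x) atTop (nhds L)
      have : (fun n => Zf ε n x) = fun n => pPre b n ε := by
        funext n; rw [hbd]; rfl
      rw [this]; exact htd
  · rintro (⟨⟨hA, hIco⟩, -⟩ | ⟨hx, -⟩)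
    · exact ⟨dig x, fBin_dig hIco, hA⟩
    · exact hx

lemma measurableSet_Lset (ε L : ℝ) : MeasurableSet (Lset ε L) := by
  rw [lset_decomp ε L]
  exact (((measurableSet_Aset ε L).inter measurableSet_Ico).diff
      (dyadics_countable.measurableSet)).union
    ((dyadics_countable.mono inter_subset_right).measurableSet)

lemma volume_Lset (ε L : ℝ) : volume (Lset ε L) = Pm (Aset ε L) := by
  have h1 : volume (Lset ε L ∩ dyadics) = 0 :=
    (dyadics_countable.mono inter_subset_right).measure_zero _
  have h2 : volume ((Aset ε L ∩ Ico 0 1) \ dyadics) = volume (Aset ε L ∩ Ico 0 1) :=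
    measure_diff_null dyadics_null
  have h3 : volume (Lset ε L) = volume ((Aset ε L ∩ Ico 0 1) \ dyadics) := by
    rw [lset_decomp ε L]
    refine le_antisymm ((measure_union_le _ _).trans ?_) (measure_mono subset_union_left)
    rw [h1, add_zero]
  rw [h3, h2, Pm, Measure.restrict_apply (measurableSet_Aset ε L)]


/-- `G_ε` and `B_ε` are Lebesgue measurable with `λ(G_ε) = 1 - ε` (the BEC capacity) and
`λ(B_ε) = ε`. -/
theorem good_bad_lebesgue_measure :
    ∀ ε ∈ Set.Ioo (0 : ℝ) 1,
      MeasurableSet (Gset ε) ∧ MeasurableSet (Bset ε) ∧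
      volume (Gset ε) = ENNReal.ofReal (1 - ε) ∧ volume (Bset ε) = ENNReal.ofReal ε := by
  intro ε hε
  have hεI : ε ∈ Icc (0:ℝ) 1 := ⟨le_of_lt hε.1, le_of_lt hε.2⟩
  have hG : Gset ε = Lset ε 0 := rfl
  have hB : Bset ε = Lset ε 1 := rfl
  refine ⟨hG ▸ measurableSet_Lset ε 0, hB ▸ measurableSet_Lset ε 1, ?_, ?_⟩
  · rw [hG, volume_Lset, Pm_Aset_zero hεI]
  · rw [hB, volume_Lset, Pm_Aset_one hεI]

end
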